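/- Let K be ℝ or ℂ and let G be an abelian subgroup of S_n(K). For all u, v ∈ K^n with first coordinates u_1 ≠ 0 and v_1 ≠ 0, and for every sequence (B_m)_{m∈ℕ} in G such that lim_{m→∞} B_m u = v, one has lim_{m→∞} B_m^{-1} v = u. -/

import Mathlib

open Matrix Filter Topology

/-- `B` belongs to `S_N(K)`: lower triangular with all diagonal entries equal. -/
def IsSnMatrix {K : Type*} [Field K] {N : ℕ} (B : Matrix (Fin N) (Fin N) K) : Prop :=
  (∀ i j : Fin N, i < j → B i j = 0) ∧ (∀ i j : Fin N, B i i = B j j)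

set_option maxHeartbeats 2000000
set_option synthInstance.maxHeartbeats 400000

/-- Let `K = ℝ` or `ℂ` and let `G` be an abelian subgroup of `S_n(K)`. For all `u, v ∈ Kⁿ`
with nonzero first coordinates and every sequence `(B_m)` in `G` with `lim B_m u = v`, one has
`lim B_m⁻¹ v = u`. -/
theorem tendsto_inv_of_tendsto {K : Type*} [RCLike K] (n : ℕ) (hn : 0 < n)
    (G : Subgroup (Matrix.GeneralLinearGroup (Fin n) K))
    (hGcomm : ∀ A ∈ G, ∀ B ∈ G, A * B = B * A)
    (hS : ∀ B ∈ G, IsSnMatrix (B : Matrix (Fin n) (Fin n) K))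
    (u v : Fin n → K) (hu : u ⟨0, hn⟩ ≠ 0) (hv : v ⟨0, hn⟩ ≠ 0)
    (B : ℕ → Matrix.GeneralLinearGroup (Fin n) K) (hB : ∀ m, B m ∈ G)
    (hlim : Tendsto (fun m => (B m : Matrix (Fin n) (Fin n) K).mulVec u) atTop (𝓝 v)) :
    Tendsto (fun m => ((B m)⁻¹ : Matrix (Fin n) (Fin n) K).mulVec v) atTop (𝓝 u) := by
  classical
  set i0 : Fin n := ⟨0, hn⟩ with hi0
  -- the span of (the matrices of) G
  set S : Set (Matrix (Fin n) (Fin n) K) :=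
    (fun g : Matrix.GeneralLinearGroup (Fin n) K => (g : Matrix (Fin n) (Fin n) K)) '' (G : Set _)
    with hSdef
  set W : Submodule K (Matrix (Fin n) (Fin n) K) := Submodule.span K S with hWdef
  -- every element of W is lower triangular with constant diagonal
  have hW_tri : ∀ A ∈ W, (∀ i j : Fin n, i < j → A i j = 0) ∧ (∀ i j : Fin n, A i i = A j j) := by
    intro A hA
    induction hA using Submodule.span_induction with
    | mem x hx =>
      obtain ⟨g, hg, rfl⟩ := hx
      exact hS g hg
    | zero => simp
    | add x y _ _ hx hy =>
      refine ⟨fun i j h => ?_, fun i j => ?_⟩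
      · simp [Matrix.add_apply, hx.1 i j h, hy.1 i j h]
      · simp [Matrix.add_apply, hx.2 i j, hy.2 i j]
    | smul c x _ hx =>
      refine ⟨fun i j h => ?_, fun i j => ?_⟩
      · simp [Matrix.smul_apply, hx.1 i j h]
      · simp [Matrix.smul_apply, hx.2 i j]
  -- every element of W commutes with every element of G
  have hW_comm : ∀ A ∈ W, ∀ g ∈ G,
      A * (g : Matrix (Fin n) (Fin n) K) = (g : Matrix (Fin n) (Fin n) K) * A := by
    intro A hA
    induction hA using Submodule.span_induction with
    | mem x hx =>
      obtain ⟨h, hh, rfl⟩ := hx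
      intro g hg
      have := hGcomm h hh g hg
      calc (h : Matrix (Fin n) (Fin n) K) * g = ((h * g : _) : Matrix (Fin n) (Fin n) K) := rfl
        _ = ((g * h : _) : Matrix (Fin n) (Fin n) K) := by rw [this]
        _ = (g : Matrix (Fin n) (Fin n) K) * h := rfl
    | zero => intro g hg; simp
    | add x y _ _ hx hy => intro g hg; rw [add_mul, mul_add, hx g hg, hy g hg]
    | smul c x _ hx => intro g hg; rw [smul_mul_assoc, mul_smul_comm, hx g hg]
  -- the span of the orbit of u
  set E : Submodule K (Fin n → K) := Submodule.span K
    ((fun g : Matrix.GeneralLinearGroup (Fin n) K =>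
      (g : Matrix (Fin n) (Fin n) K).mulVec u) '' (G : Set _)) with hEdef
  have huE : u ∈ E := Submodule.subset_span ⟨1, G.one_mem, by simp⟩
  have hGE : ∀ g ∈ G, ∀ x ∈ E, (g : Matrix (Fin n) (Fin n) K).mulVec x ∈ E := by
    intro g hg x hx
    induction hx using Submodule.span_induction with
    | mem y hy =>
      obtain ⟨h, hh, rfl⟩ := hy
      rw [Matrix.mulVec_mulVec]
      exact Submodule.subset_span ⟨g * h, G.mul_mem hg hh, rfl⟩
    | zero => simp
    | add x y _ _ hx hy => rw [Matrix.mulVec_add]; exact E.add_mem hx hy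
    | smul c x _ hx => rw [Matrix.mulVec_smul]; exact E.smul_mem c hx
  have hWE : ∀ A ∈ W, ∀ x ∈ E, A.mulVec x ∈ E := by
    intro A hA
    induction hA using Submodule.span_induction with
    | mem y hy =>
      obtain ⟨g, hg, rfl⟩ := hy
      exact hGE g hg
    | zero => intro x hx; simp
    | add x y _ _ hx hy =>
      intro z hz
      rw [Matrix.add_mulVec]
      exact E.add_mem (hx z hz) (hy z hz)
    | smul c x _ hx =>
      intro z hz
      rw [Matrix.smul_mulVec]
      exact E.smul_mem c (hx z hz)
  -- if A ∈ W kills u, it kills all of E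
  have hker : ∀ A ∈ W, A.mulVec u = 0 → ∀ x ∈ E, A.mulVec x = 0 := by
    intro A hA hAu x hx
    induction hx using Submodule.span_induction with
    | mem y hy =>
      obtain ⟨g, hg, rfl⟩ := hy
      rw [Matrix.mulVec_mulVec, hW_comm A hA g hg, ← Matrix.mulVec_mulVec, hAu,
        Matrix.mulVec_zero]
    | zero => simp
    | add x y _ _ hx hy => rw [Matrix.mulVec_add, hx, hy, add_zero]
    | smul c x _ hx => rw [Matrix.mulVec_smul, hx, smul_zero]
  have hBmE : ∀ m, (B m : Matrix (Fin n) (Fin n) K).mulVec u ∈ E := fun m =>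
    Submodule.subset_span ⟨B m, hB m, rfl⟩
  have hvE : v ∈ E :=
    (Submodule.closed_of_finiteDimensional E).mem_of_tendsto hlim
      (Filter.Eventually.of_forall hBmE)
  -- the evaluation linear map A ↦ A *ᵥ u
  set L : Matrix (Fin n) (Fin n) K →ₗ[K] (Fin n → K) :=
    { toFun := fun A => A.mulVec u
      map_add' := fun A C => Matrix.add_mulVec A C u
      map_smul' := fun c A => Matrix.smul_mulVec c A u } with hLdef
  have hEW : E ≤ W.map L := by
    rw [hEdef]
    refine Submodule.span_le.2 ?_
    rintro _ ⟨g, hg, rfl⟩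
    exact ⟨g, Submodule.subset_span ⟨g, hg, rfl⟩, rfl⟩
  obtain ⟨T, hTW, hTu⟩ := hEW hvE
  have hTu : T.mulVec u = v := hTu
  have hTtri := hW_tri T hTW
  -- the diagonal of T is nonzero
  have hT0 : T i0 i0 ≠ 0 := by
    have h1 : T.mulVec u i0 = T i0 i0 * u i0 := by
      rw [Matrix.mulVec, dotProduct]
      refine Finset.sum_eq_single i0 (fun j _ hj => ?_) (by simp)
      have : i0 < j := by
        refine lt_of_le_of_ne (by simp [hi0, Fin.le_def]) (Ne.symm hj)
      rw [hTtri.1 i0 j this, zero_mul]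
    intro h
    rw [hTu] at h1
    rw [h, zero_mul] at h1
    exact hv h1
  have hTunit : IsUnit T := by
    rw [Matrix.isUnit_iff_isUnit_det]
    have htri : T.BlockTriangular OrderDual.toDual := fun i j h => hTtri.1 i j h
    rw [Matrix.det_of_lowerTriangular T htri]
    refine isUnit_iff_ne_zero.2 ?_
    refine Finset.prod_ne_zero_iff.2 fun i _ => ?_
    rw [hTtri.2 i i0]
    exact hT0
  have hTinj : Function.Injective T.mulVec := Matrix.mulVec_injective_iff_isUnit.2 hTunit
  haveI : CompleteSpace E := FiniteDimensional.complete K E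
  -- restriction to E, as plain linear maps
  set ρ : W →ₗ[K] (E →ₗ[K] E) :=
    { toFun := fun A => (Matrix.mulVecLin A.val).restrict (fun x hx => hWE A.val A.2 x hx)
      map_add' := by
        intro A C
        refine LinearMap.ext fun x => Subtype.ext ?_
        show ((A.val + C.val).mulVec x : Fin n → K) = A.val.mulVec x + C.val.mulVec x
        rw [Matrix.add_mulVec]
      map_smul' := by
        intro c A
        refine LinearMap.ext fun x => Subtype.ext ?_
        show ((c • A.val).mulVec x : Fin n → K) = c • (A.val.mulVec x : Fin n → K)
        rw [Matrix.smul_mulVec] } with hρdef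
  have hρ_apply : ∀ (A : W) (x : E), ((ρ A x : E) : Fin n → K) = A.val.mulVec x := by
    intro A x
    rfl
  set ue : E := ⟨u, huE⟩ with huedef
  set ve : E := ⟨v, hvE⟩ with hvedef
  -- coordinates
  set d : ℕ := Module.finrank K E with hddef
  set b : Module.Basis (Fin d) K E := Module.finBasis K E with hbdef
  set ψ : W →ₗ[K] Matrix (Fin d) (Fin d) K :=
    (LinearMap.toMatrix b b).toLinearMap.comp ρ with hψdef
  have hψ_apply : ∀ A : W, Matrix.toLin b b (ψ A) = ρ A := by
    intro A
    show Matrix.toLin b b (LinearMap.toMatrix b b (ρ A)) = ρ A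
    rw [Matrix.toLin_toMatrix]
  -- evaluation at u, from matrices
  set θ : Matrix (Fin d) (Fin d) K →ₗ[K] E :=
    { toFun := fun M => (Matrix.toLin b b M) ue
      map_add' := by
        intro M N
        show (Matrix.toLin b b (M + N)) ue = (Matrix.toLin b b M) ue + (Matrix.toLin b b N) ue
        rw [map_add, LinearMap.add_apply]
      map_smul' := by
        intro c M
        show (Matrix.toLin b b (c • M)) ue = c • (Matrix.toLin b b M) ue
        rw [_root_.map_smul, LinearMap.smul_apply] } with hθdef
  have hθψ : ∀ A : W, ((θ (ψ A) : E) : Fin n → K) = A.val.mulVec u := by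
    intro A
    show (((Matrix.toLin b b (ψ A)) ue : E) : Fin n → K) = A.val.mulVec u
    rw [hψ_apply]
    exact hρ_apply A ue
  set V : Submodule K (Matrix (Fin d) (Fin d) K) := LinearMap.range ψ with hVdef
  set κ : V →ₗ[K] E := θ.comp V.subtype with hκdef
  have hκ0 : ∀ f : V, κ f = 0 → f = 0 := by
    rintro ⟨f, hf⟩ hf0
    obtain ⟨A, rfl⟩ := hf
    have hAu : A.val.mulVec u = 0 := by
      have h1 := congrArg (fun z : E => (z : Fin n → K)) hf0
      rw [show ((κ ⟨ψ A, LinearMap.mem_range_self ψ A⟩ : E) : Fin n → K)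
          = ((θ (ψ A) : E) : Fin n → K) from rfl, hθψ] at h1
      exact h1
    have hρ0 : ρ A = 0 := by
      refine LinearMap.ext fun x => Subtype.ext ?_
      rw [hρ_apply, hker A.val A.2 hAu x x.2]
      rfl
    refine Subtype.ext ?_
    show ψ A = 0
    rw [hψdef]
    show LinearMap.toMatrix b b (ρ A) = 0
    rw [hρ0, map_zero]
  have hκinj : Function.Injective κ :=
    LinearMap.ker_eq_bot.mp (LinearMap.ker_eq_bot'.mpr hκ0)
  -- the elements of the sequence, inside W
  set Wm : ℕ → W := fun m => ⟨(B m : Matrix (Fin n) (Fin n) K),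
    Submodule.subset_span ⟨B m, hB m, rfl⟩⟩ with hWmdef
  set Wm' : ℕ → W := fun m => ⟨((B m)⁻¹ : Matrix (Fin n) (Fin n) K),
    Submodule.subset_span ⟨(B m)⁻¹, G.inv_mem (hB m), Matrix.coe_units_inv (B m)⟩⟩ with hWm'def
  set WT : W := ⟨T, hTW⟩ with hWTdef
  -- ψ (B m) * ψ (B m)⁻¹ = 1
  have hρ_mul : ∀ A C : W, A.val * C.val = 1 → ρ A * ρ C = 1 := by
    intro A C hAC
    refine LinearMap.ext fun x => Subtype.ext ?_
    show A.val.mulVec ((ρ C x : E) : Fin n → K) = (x : Fin n → K)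
    rw [hρ_apply, Matrix.mulVec_mulVec, hAC, Matrix.one_mulVec]
  have hψ_mul : ∀ A C : W, A.val * C.val = 1 → ψ A * ψ C = 1 := by
    intro A C hAC
    show LinearMap.toMatrix b b (ρ A) * LinearMap.toMatrix b b (ρ C) = 1
    rw [← LinearMap.toMatrix_mul, hρ_mul A C hAC, LinearMap.toMatrix_one]
  have hBmmul : ∀ m, (Wm m).val * (Wm' m).val = 1 ∧ (Wm' m).val * (Wm m).val = 1 := by
    intro m
    constructor
    · show (B m : Matrix (Fin n) (Fin n) K) * ((B m : Matrix (Fin n) (Fin n) K))⁻¹ = 1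
      rw [← Matrix.coe_units_inv, ← Units.val_mul, mul_inv_cancel, Units.val_one]
    · show ((B m : Matrix (Fin n) (Fin n) K))⁻¹ * (B m : Matrix (Fin n) (Fin n) K) = 1
      rw [← Matrix.coe_units_inv, ← Units.val_mul, inv_mul_cancel, Units.val_one]
  -- ψ T is invertible
  have hfinj : Function.Injective (ρ WT) := by
    intro x y hxy
    refine Subtype.ext (hTinj ?_)
    have := congrArg (Subtype.val) hxy
    rwa [hρ_apply, hρ_apply] at this
  have hfbij : Function.Bijective (ρ WT) :=
    ⟨hfinj, (LinearMap.injective_iff_surjective (f := ρ WT)).1 hfinj⟩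
  set eT : E ≃ₗ[K] E := LinearEquiv.ofBijective (ρ WT) hfbij with heTdef
  have heT_apply : ∀ x : E, eT x = (ρ WT) x := fun x => rfl
  set MT : Matrix (Fin d) (Fin d) K := ψ WT with hMTdef
  set NT : Matrix (Fin d) (Fin d) K := LinearMap.toMatrix b b eT.symm.toLinearMap with hNTdef
  have hMTNT : MT * NT = 1 := by
    show LinearMap.toMatrix b b (ρ WT) * LinearMap.toMatrix b b eT.symm.toLinearMap = 1
    rw [← LinearMap.toMatrix_mul, ← LinearMap.toMatrix_one (v₁ := b)]
    congr 1
    refine LinearMap.ext fun x => ?_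
    show (ρ WT) (eT.symm x) = x
    rw [← heT_apply]
    exact eT.apply_symm_apply x
  have hMTinv : MT⁻¹ = NT := Matrix.inv_eq_right_inv hMTNT
  have hMTdet : MT.det ≠ 0 := by
    intro h
    have : (MT * NT).det = 0 := by rw [Matrix.det_mul, h, zero_mul]
    rw [hMTNT, Matrix.det_one] at this
    exact one_ne_zero this
  -- convergence ψ (B m) → ψ T
  set vm : ℕ → V := fun m => ⟨ψ (Wm m), LinearMap.mem_range_self ψ (Wm m)⟩ with hvmdef
  set vT : V := ⟨MT, LinearMap.mem_range_self ψ WT⟩ with hvTdef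
  have hκlim : Tendsto (fun m => κ (vm m)) atTop (𝓝 (κ vT)) := by
    rw [Topology.IsEmbedding.subtypeVal.tendsto_nhds_iff]
    have heq : ∀ m, ((κ (vm m) : E) : Fin n → K)
        = (B m : Matrix (Fin n) (Fin n) K).mulVec u := fun m => hθψ (Wm m)
    have heqT : ((κ vT : E) : Fin n → K) = v := by
      rw [show ((κ vT : E) : Fin n → K) = ((θ (ψ WT) : E) : Fin n → K) from rfl, hθψ]
      exact hTu
    simp only [Function.comp_def, heq, heqT]
    exact hlim
  set e1 : V ≃ₗ[K] LinearMap.range κ := LinearEquiv.ofInjective κ hκinj with he1def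
  have hψlim : Tendsto (fun m => ψ (Wm m)) atTop (𝓝 MT) := by
    have he1lim : Tendsto (fun m => e1 (vm m)) atTop (𝓝 (e1 vT)) := by
      rw [Topology.IsEmbedding.subtypeVal.tendsto_nhds_iff]
      exact hκlim
    have hc : Continuous (e1.symm : LinearMap.range κ →ₗ[K] V) :=
      LinearMap.continuous_of_finiteDimensional (𝕜 := K) (E := LinearMap.range κ) (F' := V) e1.symm.toLinearMap
    have h2 : Tendsto (fun m => vm m) atTop (𝓝 vT) := by
      have := (hc.tendsto (e1 vT)).comp he1lim
      simpa only [Function.comp_def, LinearEquiv.coe_coe, LinearEquiv.symm_apply_apply] using this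
    exact (continuous_subtype_val.tendsto vT).comp h2
  -- convergence of inverses
  have hinvlim : Tendsto (fun m => (ψ (Wm m))⁻¹) atTop (𝓝 MT⁻¹) := by
    refine (continuousAt_matrix_inv MT ?_).tendsto.comp hψlim
    have : (Ring.inverse : K → K) = Inv.inv := by
      funext x
      exact Ring.inverse_eq_inv x
    rw [this]
    exact continuousAt_inv₀ hMTdet
  have hinv_eq : ∀ m, (ψ (Wm m))⁻¹ = ψ (Wm' m) := fun m =>
    Matrix.inv_eq_right_inv (hψ_mul (Wm m) (Wm' m) (hBmmul m).1)
  have hinvlim' : Tendsto (fun m => ψ (Wm' m)) atTop (𝓝 NT) := by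
    rw [← hMTinv]
    simpa only [hinv_eq] using hinvlim
  -- evaluate at v
  set θv : Matrix (Fin d) (Fin d) K →ₗ[K] E :=
    { toFun := fun M => (Matrix.toLin b b M) ve
      map_add' := by
        intro M N
        show (Matrix.toLin b b (M + N)) ve = (Matrix.toLin b b M) ve + (Matrix.toLin b b N) ve
        rw [map_add, LinearMap.add_apply]
      map_smul' := by
        intro c M
        show (Matrix.toLin b b (c • M)) ve = c • (Matrix.toLin b b M) ve
        rw [_root_.map_smul, LinearMap.smul_apply] } with hθvdef
  have hθvc : Continuous θv := LinearMap.continuous_of_finiteDimensional θv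
  have hfinal : Tendsto (fun m => θv (ψ (Wm' m))) atTop (𝓝 (θv NT)) :=
    (hθvc.tendsto NT).comp hinvlim'
  have hNTv : θv NT = ue := by
    have h1 : (ρ WT) ue = ve := by
      refine Subtype.ext ?_
      rw [hρ_apply]
      exact hTu
    show (Matrix.toLin b b NT) ve = ue
    rw [hNTdef, Matrix.toLin_toMatrix]
    rw [← h1, ← heT_apply]
    exact eT.symm_apply_apply ue
  have hval : ∀ m, ((θv (ψ (Wm' m)) : E) : Fin n → K)
      = ((B m)⁻¹ : Matrix (Fin n) (Fin n) K).mulVec v := by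
    intro m
    show (((Matrix.toLin b b (ψ (Wm' m))) ve : E) : Fin n → K) = _
    rw [hψ_apply]
    exact hρ_apply (Wm' m) ve
  rw [hNTv] at hfinal
  have := (continuous_subtype_val.tendsto ue).comp hfinal
  simp only [Function.comp_def, hval] at this
  exact this
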